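/- Let ω = (α, α', 1) ∈ Y, with (p_n/q_n) the convergents of α and (p'_n/q'_n) the convergents of α', and let h(θ) = −Σ_{n≥1} e^{−q_n} cos 2π(q_n θ₁ − p_n θ₃) − Σ_{n≥1} e^{−q'_n} cos 2π(q'_n θ₂ − p'_n θ₃). Then the Hamiltonian flow of H(θ,r) = ⟨r,ω⟩ + h(θ) satisfies, for each n: (a) for all t ∈ [e^{q_n}, q_{n+1}/4], the time-t map Φ^t_H is (1, 1/q_n, q_n)-stretching; (b) for all t ∈ [e^{q'_n}, q'_{n+1}/4], the time-t map Φ^t_H is (2, 1/q'_n, q'_n)-stretching. -/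

import Mathlib

/-!
STATEMENT 3 (Proposition 1 of the paper):
Let ω = (α, α', 1) ∈ Y with convergents (p_n/q_n), (p'_n/q'_n) of α, α', and let
h(θ) = −Σ_{n≥1} e^{−q_n} cos 2π(q_n θ₁ − p_n θ₃) − Σ_{n≥1} e^{−q'_n} cos 2π(q'_n θ₂ − p'_n θ₃).
Then the Hamiltonian flow of H(θ,r) = ⟨r,ω⟩ + h(θ) satisfies, for each n:
(a) for all t ∈ [e^{q_n}, q_{n+1}/4], Φ^t_H is (1, 1/q_n, q_n)-stretching;
(b) for all t ∈ [e^{q'_n}, q'_{n+1}/4], Φ^t_H is (2, 1/q'_n, q'_n)-stretching.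

We work on the universal cover ℝ³ × ℝ³.
-/

open Real Set

noncomputable section

/-- Phase space (the universal cover of 𝕋³ × ℝ³). -/
abbrev PS3 : Type := (Fin 3 → ℝ) × (Fin 3 → ℝ)

/-- `Φ` is the flow of the Hamiltonian ODE θ̇ = ∂H/∂r, ṙ = −∂H/∂θ. -/
def IsHamFlow (H : PS3 → ℝ) (Φ : ℝ → PS3 → PS3) : Prop :=
  (∀ x, Φ 0 x = x) ∧
  (∀ (x : PS3) (t : ℝ) (j : Fin 3),
    HasDerivAt (fun s : ℝ => (Φ s x).1 j)
      (deriv (fun y : ℝ => H ((Φ t x).1, Function.update (Φ t x).2 j y)) ((Φ t x).2 j)) t) ∧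
  (∀ (x : PS3) (t : ℝ) (j : Fin 3),
    HasDerivAt (fun s : ℝ => (Φ s x).2 j)
      (-deriv (fun y : ℝ => H (Function.update (Φ t x).1 j y, (Φ t x).2)) ((Φ t x).1 j)) t)

/-- The interval J⁽¹⁾(s₀, l): the curve in the energy surface {H = H(s₀)} whose
θ₁-coordinate runs over [θ₀₁, θ₀₁ + l], all other coordinates except r₃ being
frozen, and r₃ determined by the energy constraint. -/
def J1 (H : PS3 → ℝ) (s₀ : PS3) (l : ℝ) : Set PS3 :=
  {x | (∃ s ∈ Icc (0 : ℝ) l, x.1 0 = s₀.1 0 + s) ∧ x.1 1 = s₀.1 1 ∧ x.1 2 = s₀.1 2 ∧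
       x.2 0 = s₀.2 0 ∧ x.2 1 = s₀.2 1 ∧ H x = H s₀}

/-- The interval J⁽²⁾(s₀, l): same with the segment in the θ₂ direction. -/
def J2 (H : PS3 → ℝ) (s₀ : PS3) (l : ℝ) : Set PS3 :=
  {x | x.1 0 = s₀.1 0 ∧ (∃ s ∈ Icc (0 : ℝ) l, x.1 1 = s₀.1 1 + s) ∧ x.1 2 = s₀.1 2 ∧
       x.2 0 = s₀.2 0 ∧ x.2 1 = s₀.2 1 ∧ H x = H s₀}

/-- Φ^t is (1, l, L)-stretching: for every interval J⁽¹⁾(s₀, l) with |r₀| ≤ L/10,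
the projection of Φ^t(J⁽¹⁾) on the r₁-coordinate contains [−L, L]; moreover
(θ,r) ↦ π_{r₁}(Φ^t(θ,r)) is independent of θ₂. -/
def Stretching1 (H : PS3 → ℝ) (Φ : ℝ → PS3 → PS3) (t l L : ℝ) : Prop :=
  (∀ s₀ : PS3, ‖s₀.2‖ ≤ L / 10 →
    Icc (-L) L ⊆ (fun x => (Φ t x).2 0) '' J1 H s₀ l) ∧
  (∀ x y : PS3, x.1 0 = y.1 0 → x.1 2 = y.1 2 → x.2 = y.2 →
    (Φ t x).2 0 = (Φ t y).2 0)

/-- Φ^t is (2, l, L)-stretching. -/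
def Stretching2 (H : PS3 → ℝ) (Φ : ℝ → PS3 → PS3) (t l L : ℝ) : Prop :=
  (∀ s₀ : PS3, ‖s₀.2‖ ≤ L / 10 →
    Icc (-L) L ⊆ (fun x => (Φ t x).2 1) '' J2 H s₀ l) ∧
  (∀ x y : PS3, x.1 1 = y.1 1 → x.1 2 = y.1 2 → x.2 = y.2 →
    (Φ t x).2 1 = (Φ t y).2 1)

/-- The denominator q_n of the n-th convergent of α. -/
def cfq (α : ℝ) (n : ℕ) : ℝ := (GenContFract.of α).dens n

/-- The numerator p_n of the n-th convergent of α. -/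
def cfp (α : ℝ) (n : ℕ) : ℝ := (GenContFract.of α).nums n

/-- ω = (α, α', 1) belongs to the Yoccoz class Y. -/
def MemY (α α' : ℝ) : Prop :=
  Irrational α ∧ Irrational α' ∧
    ∀ n : ℕ, 1 ≤ n →
      Real.exp (cfq α n) ≤ cfq α' n / 4 ∧ Real.exp (cfq α' n) ≤ cfq α (n + 1) / 4

/-- The perturbation h of formula (4) of the paper. -/
def hY (α α' : ℝ) (θ : Fin 3 → ℝ) : ℝ :=
  -(∑' n : ℕ, Real.exp (-cfq α (n + 1)) *
      Real.cos (2 * π * (cfq α (n + 1) * θ 0 - cfp α (n + 1) * θ 2)))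
  - ∑' n : ℕ, Real.exp (-cfq α' (n + 1)) *
      Real.cos (2 * π * (cfq α' (n + 1) * θ 1 - cfp α' (n + 1) * θ 2))

namespace StretchAux


/-! ### Elementary numeric lemmas -/

lemma abs_sin_le_abs (x : ℝ) : |Real.sin x| ≤ |x| := by
  rcases eq_or_ne x 0 with rfl | hx
  · simp
  · have h := (Real.sin_sq_lt_sq hx).le
    rw [← Real.sqrt_sq_eq_abs, ← Real.sqrt_sq_eq_abs]
    exact Real.sqrt_le_sqrt h

lemma abs_cos_sub_cos_le (x y : ℝ) : |Real.cos x - Real.cos y| ≤ |x - y| := by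
  rw [Real.cos_sub_cos]
  have h1 := Real.neg_one_le_sin ((x + y) / 2)
  have h2 := Real.sin_le_one ((x + y) / 2)
  have h3 := abs_sin_le_abs ((x - y) / 2)
  calc |(-2) * Real.sin ((x+y)/2) * Real.sin ((x-y)/2)|
      = 2 * |Real.sin ((x+y)/2)| * |Real.sin ((x-y)/2)| := by
        rw [abs_mul, abs_mul]; norm_num
    _ ≤ 2 * 1 * |(x - y)/2| := by
        have : |Real.sin ((x+y)/2)| ≤ 1 := abs_le.2 ⟨h1, h2⟩
        have h0 : (0:ℝ) ≤ |Real.sin ((x-y)/2)| := abs_nonneg _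
        nlinarith [abs_nonneg (Real.sin ((x+y)/2))]
    _ ≤ |x - y| := by rw [abs_div, abs_two]; linarith [abs_nonneg (x-y)]

lemma abs_cos_sub_cos_le_two (x y : ℝ) : |Real.cos x - Real.cos y| ≤ 2 := by
  have h1 := Real.neg_one_le_cos x
  have h2 := Real.cos_le_one x
  have h3 := Real.neg_one_le_cos y
  have h4 := Real.cos_le_one y
  rw [abs_le]; constructor <;> linarith

/-- `x ≤ exp (x/2)` for `x ≥ 8` (indeed for all `x ≥ 0` but this is easy). -/
lemma self_le_exp_half {x : ℝ} (hx : 8 ≤ x) : x ≤ Real.exp (x / 2) := by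
  have h := Real.add_one_le_exp (x / 4)
  have h2 : Real.exp (x/2) = Real.exp (x/4) * Real.exp (x/4) := by
    rw [← Real.exp_add]; ring_nf
  nlinarith [Real.exp_pos (x/4)]

/-- `x² ≤ exp (x/2)` for `x ≥ 32`. -/
lemma sq_le_exp_half {x : ℝ} (hx : 100 ≤ x) : x ^ 2 ≤ Real.exp (x / 2) := by
  have h := Real.add_one_le_exp (x / 8)
  have h2 : Real.exp (x/2) = Real.exp (x/8) * Real.exp (x/8) * (Real.exp (x/8) * Real.exp (x/8)) := by
    rw [← Real.exp_add, ← Real.exp_add]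
    congr 1; ring
  have hp := Real.exp_pos (x/8)
  have key : x ≤ (x/8 + 1) * (x/8 + 1) := by nlinarith
  have k2 : (x/8+1)*(x/8+1) ≤ Real.exp (x/8) * Real.exp (x/8) := by nlinarith
  nlinarith

/-- `x·e^{−x} ≤ e^{−1}` for all `x`. -/
lemma mul_exp_neg_le (x : ℝ) : x * Real.exp (-x) ≤ Real.exp (-1) := by
  have h : x ≤ Real.exp (x - 1) := by
    have := Real.add_one_le_exp (x - 1); linarith
  calc x * Real.exp (-x) ≤ Real.exp (x - 1) * Real.exp (-x) := by
        exact mul_le_mul_of_nonneg_right h (Real.exp_pos _).le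
    _ = Real.exp (-1) := by rw [← Real.exp_add]; ring_nf

lemma summable_exp_half : Summable (fun k : ℕ => Real.exp (-(k : ℝ) / 2)) := by
  have : (fun k : ℕ => Real.exp (-(k : ℝ) / 2)) = fun k : ℕ => (Real.exp (-1/2 : ℝ)) ^ k := by
    funext k
    rw [← Real.exp_nat_mul]
    congr 1; ring
  rw [this]
  exact summable_geometric_of_lt_one (Real.exp_pos _).le
    (Real.exp_lt_one_iff.2 (by norm_num))

lemma tsum_exp_half_le : (∑' k : ℕ, Real.exp (-((k : ℝ) + 101) / 2)) ≤ 1 / 100 := by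
  have heq : ∀ k : ℕ, Real.exp (-((k : ℝ) + 101) / 2)
      = Real.exp (-101/2) * (Real.exp (-1/2 : ℝ)) ^ k := by
    intro k
    rw [← Real.exp_nat_mul, ← Real.exp_add]
    congr 1; ring
  calc (∑' k : ℕ, Real.exp (-((k : ℝ) + 101) / 2))
      = Real.exp (-101/2) * ∑' k : ℕ, (Real.exp (-1/2 : ℝ)) ^ k := by
        rw [← tsum_mul_left]; exact tsum_congr heq
    _ = Real.exp (-101/2) * (1 - Real.exp (-1/2 : ℝ))⁻¹ := by
        rw [tsum_geometric_of_lt_one (Real.exp_pos _).le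
          (Real.exp_lt_one_iff.2 (by norm_num))]
    _ ≤ 1/100 := by
        have h1 : Real.exp (-1/2 : ℝ) ≤ 2/3 := by
          have hh : (3/2 : ℝ) ≤ Real.exp (1/2) := by
            have := Real.add_one_le_exp (1/2 : ℝ); linarith
          rw [show (-1/2 : ℝ) = -(1/2) by norm_num, Real.exp_neg]
          calc (Real.exp (1/2))⁻¹ ≤ ((3:ℝ)/2)⁻¹ := by
                exact inv_anti₀ (by norm_num) hh
            _ = 2/3 := by norm_num
        have h2 : Real.exp (-101/2 : ℝ) ≤ 1/300 := by
          have hh : (300 : ℝ) ≤ Real.exp (101/2) := by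
            calc (300 : ℝ) ≤ 11 ^ 5 := by norm_num
              _ ≤ Real.exp 10 ^ 5 := by
                  have h10 : (11 : ℝ) ≤ Real.exp 10 := by
                    have := Real.add_one_le_exp (10:ℝ); linarith
                  exact pow_le_pow_left₀ (by norm_num) h10 5
              _ = Real.exp 50 := by
                  rw [← Real.exp_nat_mul]; norm_num
              _ ≤ Real.exp (101/2) := by
                  exact Real.exp_le_exp.2 (by norm_num)
          rw [show (-101/2 : ℝ) = -(101/2) by norm_num, Real.exp_neg]
          calc (Real.exp (101/2))⁻¹ ≤ ((300:ℝ))⁻¹ := inv_anti₀ (by norm_num) hh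
            _ ≤ 1/300 := by norm_num
        have h3 : (0:ℝ) < 1 - Real.exp (-1/2) := by
          have := Real.exp_lt_one_iff.2 (show (-1/2:ℝ) < 0 by norm_num); linarith
        have h4 : (1 - Real.exp (-1/2 : ℝ))⁻¹ ≤ 3 := by
          rw [inv_le_comm₀ h3 (by norm_num)]; linarith
        calc Real.exp (-101/2) * (1 - Real.exp (-1/2 : ℝ))⁻¹ ≤ (1/300) * 3 := by
              exact mul_le_mul h2 h4 (inv_nonneg.2 h3.le) (by norm_num)
          _ = 1/100 := by norm_num

/-- Uniqueness of solutions: two functions with the same derivative and same value at 0. -/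
lemma eq_of_hasDerivAt_eq {f g d : ℝ → ℝ}
    (hf : ∀ t, HasDerivAt f (d t) t) (hg : ∀ t, HasDerivAt g (d t) t)
    (h0 : f 0 = g 0) (t : ℝ) : f t = g t := by
  have hdiff : Differentiable ℝ (f - g) := fun x => ((hf x).sub (hg x)).differentiableAt
  have hderiv : ∀ x, deriv (f - g) x = 0 := by
    intro x
    have : HasDerivAt (f - g) (d x - d x) x := (hf x).sub (hg x)
    simpa using this.deriv
  have h := is_const_of_deriv_eq_zero hdiff hderiv t 0
  have h' : f t - g t = f 0 - g 0 := by simpa using h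
  linarith


section CF
open GenContFract
variable {v : ℝ}

open GenContFract

variable {v : ℝ}

lemma notTerm (hv : Irrational v) (n : ℕ) : ¬(GenContFract.of v).TerminatedAt n := by
  intro h
  have ht : (GenContFract.of v).Terminates := ⟨n, h⟩
  obtain ⟨q, hq⟩ := (GenContFract.terminates_iff_rat v).1 ht
  exact hv ⟨q, hq.symm⟩

lemma one_le_den (hv : Irrational v) (n : ℕ) : (1 : ℝ) ≤ cfq v n := by
  have h := GenContFract.succ_nth_fib_le_of_nth_den (v := v) (n := n) (Or.inr (notTerm hv _))
  have h1 : (1 : ℝ) ≤ (Nat.fib (n+1) : ℝ) := by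
    exact_mod_cast Nat.one_le_iff_ne_zero.2 (Nat.fib_pos.2 n.succ_pos).ne'
  exact h1.trans h

lemma den_pos (hv : Irrational v) (n : ℕ) : (0 : ℝ) < cfq v n :=
  lt_of_lt_of_le one_pos (one_le_den hv n)

lemma den_mono (hv : Irrational v) {m n : ℕ} (h : m ≤ n) : cfq v m ≤ cfq v n := by
  have : Monotone (fun k => cfq v k) :=
    monotone_nat_of_le_succ (fun k => GenContFract.of_den_mono)
  exact this h

lemma den_mul_sub_num_le (hv : Irrational v) (n : ℕ) :
    |cfq v n * v - cfp v n| ≤ 1 / cfq v (n+1) := by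
  have h := GenContFract.abs_sub_convs_le (v := v) (n := n) (notTerm hv n)
  rw [GenContFract.conv_eq_num_div_den] at h
  have hq : (0:ℝ) < cfq v n := lt_of_lt_of_le one_pos (one_le_den hv n)
  have hq1 : (0:ℝ) < cfq v (n+1) := lt_of_lt_of_le one_pos (one_le_den hv (n+1))
  have hmul : cfq v n * (v - cfp v n / cfq v n) = cfq v n * v - cfp v n := by
    field_simp
  have key : |cfq v n * v - cfp v n| = cfq v n * |v - cfp v n / cfq v n| := by
    rw [← hmul, abs_mul, abs_of_pos hq]
  rw [key]
  calc cfq v n * |v - cfp v n / cfq v n|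
      ≤ cfq v n * (1 / (cfq v n * cfq v (n+1))) := by
        exact mul_le_mul_of_nonneg_left h hq.le
    _ = 1 / cfq v (n+1) := by field_simp
  
lemma den_mul_sub_num_lower (hv : Irrational v) (n : ℕ)
    (hgrow : 2 * cfq v n ≤ cfq v (n+2)) :
    1 / (2 * cfq v (n+1)) ≤ |cfq v n * v - cfp v n| := by
  have hdet : cfp v n * cfq v (n+1) - cfq v n * cfp v (n+1) = (-1) ^ (n+1) := by
    exact SimpContFract.determinant (s := SimpContFract.of v) (notTerm hv n)
  set D0 := cfq v n * v - cfp v n with hD0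
  set D1 := cfq v (n+1) * v - cfp v (n+1) with hD1
  have hcomb : cfq v (n+1) * D0 - cfq v n * D1 = -(-1 : ℝ) ^ (n+1) := by
    rw [hD0, hD1]; rw [← hdet]; ring
  have habs : (1:ℝ) = |cfq v (n+1) * D0 - cfq v n * D1| := by
    rw [hcomb, abs_neg, abs_pow, abs_neg, abs_one, one_pow]
  have hq : (0:ℝ) < cfq v n := lt_of_lt_of_le one_pos (one_le_den hv n)
  have hq1 : (0:ℝ) < cfq v (n+1) := lt_of_lt_of_le one_pos (one_le_den hv (n+1))
  have hq2 : (0:ℝ) < cfq v (n+2) := lt_of_lt_of_le one_pos (one_le_den hv (n+2))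
  have htri : (1:ℝ) ≤ cfq v (n+1) * |D0| + cfq v n * |D1| := by
    calc (1:ℝ) = |cfq v (n+1) * D0 - cfq v n * D1| := habs
      _ ≤ |cfq v (n+1) * D0| + |cfq v n * D1| := abs_sub _ _
      _ = cfq v (n+1) * |D0| + cfq v n * |D1| := by
          rw [abs_mul, abs_mul, abs_of_pos hq1, abs_of_pos hq]
  have hD1le : |D1| ≤ 1 / cfq v (n+2) := den_mul_sub_num_le hv (n+1)
  have hsmall : cfq v n * |D1| ≤ 1/2 := by
    calc cfq v n * |D1| ≤ cfq v n * (1 / cfq v (n+2)) :=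
          mul_le_mul_of_nonneg_left hD1le hq.le
      _ ≤ 1/2 := by
          rw [mul_one_div, div_le_div_iff₀ hq2 (by norm_num)]
          linarith
  have hmain : 1/2 ≤ cfq v (n+1) * |D0| := by linarith
  rw [div_le_iff₀ (by positivity)]
  calc 1 = (1/2) * 2 := by norm_num
    _ ≤ (cfq v (n+1) * |D0|) * 2 := by linarith
    _ = |D0| * (2 * cfq v (n+1)) := by ring

end CF

set_option maxHeartbeats 2000000 in
/-- The central quantitative lemma, abstract in the "active" coordinate `i`. -/
lemma core
    (H : PS3 → ℝ) (Φ : ℝ → PS3 → PS3) (hΦ : IsHamFlow H Φ)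
    (ω : Fin 3 → ℝ) (hω2 : ω 2 = 1)
    (i : Fin 3) (hi2 : i ≠ 2)
    (Q P : ℕ → ℝ)
    (hQ0 : 1 ≤ Q 0)
    (hQk : ∀ k : ℕ, 1 ≤ k → (k : ℝ) + 100 ≤ Q k)
    (hmono : ∀ k, Q k + 1 ≤ Q (k + 1))
    (hδup : ∀ k, |Q k * ω i - P k| ≤ 1 / Q (k + 1))
    (hδlow : ∀ k, 1 / (2 * Q (k + 1)) ≤ |Q k * ω i - P k|)
    (hHθ : ∀ (θ r : Fin 3 → ℝ) (y : ℝ), H (Function.update θ i y, r)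
        = H (θ, r)
          - (∑' k, Real.exp (-Q k) * Real.cos (2 * π * (Q k * y - P k * θ 2)))
          + (∑' k, Real.exp (-Q k) * Real.cos (2 * π * (Q k * θ i - P k * θ 2))))
    (hHr : ∀ (θ r : Fin 3 → ℝ) (j : Fin 3) (y : ℝ),
        H (θ, Function.update r j y) = H (θ, r) + (y - r j) * ω j)
    (m₀ : ℕ) (t : ℝ) (ht1 : Real.exp (Q m₀) ≤ t) (ht2 : t ≤ Q (m₀ + 1) / 4) :
    (∀ s₀ : PS3, ‖s₀.2‖ ≤ Q m₀ / 10 →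
      ∀ w ∈ Icc (-(Q m₀)) (Q m₀), ∃ s ∈ Icc (0 : ℝ) (1 / Q m₀),
        (Φ t (Function.update s₀.1 i (s₀.1 i + s),
          Function.update s₀.2 2
            (s₀.2 2 + (H s₀ - H (Function.update s₀.1 i (s₀.1 i + s), s₀.2))))).2 i = w) ∧
    (∀ x y : PS3, x.1 i = y.1 i → x.1 2 = y.1 2 → x.2 i = y.2 i →
        (Φ t x).2 i = (Φ t y).2 i) := by
  -- ## Basic notation and facts
  set a : ℝ := ω i with ha
  set δ : ℕ → ℝ := fun k => Q k * a - P k with hδ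
  set A : ℕ → ℝ := fun k => Q k * Real.exp (-Q k) with hA
  have hQ1 : ∀ k, 1 ≤ Q k := by
    intro k
    induction k with
    | zero => exact hQ0
    | succ k ih => linarith [hmono k]
  have hQpos : ∀ k, 0 < Q k := fun k => lt_of_lt_of_le one_pos (hQ1 k)
  have hQmono : Monotone Q := monotone_nat_of_le_succ (fun k => by linarith [hmono k])
  have hδpos : ∀ k, 0 < |δ k| := fun k =>
    lt_of_lt_of_le (by have := hQpos (k+1); positivity) (hδlow k)
  have hδne : ∀ k, δ k ≠ 0 := fun k => by
    intro h; have := hδpos k; rw [h, abs_zero] at this; exact lt_irrefl _ this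
  have hApos : ∀ k, 0 < A k := fun k => by
    have := hQpos k; have := Real.exp_pos (-Q k); positivity
  have hAle : ∀ k, A k ≤ Real.exp (-(k : ℝ) / 2) := by
    intro k
    cases k with
    | zero =>
      calc A 0 ≤ Real.exp (-1) := mul_exp_neg_le (Q 0)
        _ ≤ Real.exp (-(0:ℕ) / 2) := by
            apply Real.exp_le_exp.2; norm_num
    | succ k =>
      have hQk1 : (k:ℝ) + 1 + 100 ≤ Q (k+1) := by
        have := hQk (k+1) (Nat.one_le_iff_ne_zero.2 (Nat.succ_ne_zero k))
        push_cast at this ⊢; linarith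
      have h8 : (8:ℝ) ≤ Q (k+1) := by linarith
      calc A (k+1) = Q (k+1) * Real.exp (-Q (k+1)) := rfl
        _ ≤ Real.exp (Q (k+1) / 2) * Real.exp (-Q (k+1)) :=
            mul_le_mul_of_nonneg_right (self_le_exp_half h8) (Real.exp_pos _).le
        _ = Real.exp (-(Q (k+1)) / 2) := by rw [← Real.exp_add]; ring_nf
        _ ≤ Real.exp (-((k:ℝ)+1) / 2) := by
            apply Real.exp_le_exp.2
            push_cast
            linarith
        _ = Real.exp (-((k+1:ℕ):ℝ) / 2) := by push_cast; ring_nf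
  have sumA : Summable A :=
    Summable.of_nonneg_of_le (fun k => (hApos k).le) hAle summable_exp_half
  have htpos : 0 < t := lt_of_lt_of_le (Real.exp_pos _) ht1
  -- ## The θ-part of the flow is a straight line
  have θflow : ∀ (x : PS3) (j : Fin 3) (τ : ℝ), (Φ τ x).1 j = x.1 j + ω j * τ := by
    intro x j τ
    have hd : ∀ σ : ℝ, HasDerivAt (fun s => (Φ s x).1 j) (ω j) σ := by
      intro σ
      have h1 := hΦ.2.1 x σ j
      have heq : (fun y : ℝ => H ((Φ σ x).1, Function.update (Φ σ x).2 j y))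
          = fun y => H ((Φ σ x).1, (Φ σ x).2) + (y - (Φ σ x).2 j) * ω j := by
        funext y; exact hHr _ _ _ _
      rw [heq] at h1
      have hder : deriv (fun y : ℝ => H ((Φ σ x).1, (Φ σ x).2) + (y - (Φ σ x).2 j) * ω j)
          ((Φ σ x).2 j) = ω j := by
        have hD : HasDerivAt (fun y : ℝ => H ((Φ σ x).1, (Φ σ x).2) + (y - (Φ σ x).2 j) * ω j)
            (1 * ω j) ((Φ σ x).2 j) :=
          (((hasDerivAt_id _).sub_const _).mul_const _).const_add _
        simpa using hD.deriv
      rwa [hder] at h1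
    exact eq_of_hasDerivAt_eq (d := fun _ => ω j) (g := fun s => x.1 j + ω j * s) hd
      (fun s => by simpa using ((hasDerivAt_id s).const_mul (ω j)).const_add (x.1 j))
      (by simp [hΦ.1 x]) τ
  -- ## The r_i-part of the flow: explicit formula
  have rflow : ∀ (x : PS3) (τ : ℝ), (Φ τ x).2 i
      = x.2 i + ∑' k, (A k / δ k) *
          (Real.cos (2 * π * ((Q k * x.1 i - P k * x.1 2) + δ k * τ))
            - Real.cos (2 * π * (Q k * x.1 i - P k * x.1 2))) := by
    intro x τ
    set c : ℕ → ℝ := fun k => Q k * x.1 i - P k * x.1 2 with hc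
    set g : ℕ → ℝ → ℝ := fun k s =>
      (A k / δ k) * (Real.cos (2 * π * (c k + δ k * s)) - Real.cos (2 * π * c k)) with hg
    set g' : ℕ → ℝ → ℝ := fun k s => -(2 * π * A k * Real.sin (2 * π * (c k + δ k * s))) with hg'
    have hsum_u : Summable (fun k : ℕ => 2 * π * Real.exp (-(k:ℝ)/2)) :=
      summable_exp_half.mul_left _
    have hgd : ∀ (k : ℕ) (s : ℝ), HasDerivAt (g k) (g' k s) s := by
      intro k s
      have h1 : HasDerivAt (fun s : ℝ => c k + δ k * s) (δ k) s := by
        simpa using ((hasDerivAt_id s).const_mul (δ k)).const_add (c k)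
      have h2 : HasDerivAt (fun s : ℝ => 2 * π * (c k + δ k * s)) (2 * π * δ k) s :=
        h1.const_mul (2 * π)
      have h3 : HasDerivAt (fun s : ℝ => Real.cos (2 * π * (c k + δ k * s)))
          (-Real.sin (2 * π * (c k + δ k * s)) * (2 * π * δ k)) s :=
        (Real.hasDerivAt_cos _).comp s h2
      have h4 := (h3.sub_const (Real.cos (2 * π * c k))).const_mul (A k / δ k)
      have hne : δ k ≠ 0 := hδne k
      refine h4.congr_deriv ?_
      rw [hg']
      field_simp
    have hgb : ∀ (k : ℕ) (s : ℝ), ‖g' k s‖ ≤ 2 * π * Real.exp (-(k:ℝ)/2) := by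
      intro k s
      have h1 : |Real.sin (2 * π * (c k + δ k * s))| ≤ 1 := Real.abs_sin_le_one _
      calc ‖g' k s‖ = 2 * π * A k * |Real.sin (2 * π * (c k + δ k * s))| := by
            rw [hg']; rw [Real.norm_eq_abs, abs_neg, abs_mul]
            congr 1
            exact abs_of_nonneg (mul_pos (mul_pos two_pos Real.pi_pos) (hApos k)).le
        _ ≤ 2 * π * A k * 1 := by
            exact mul_le_mul_of_nonneg_left h1
              (mul_pos (mul_pos two_pos Real.pi_pos) (hApos k)).le
        _ ≤ 2 * π * Real.exp (-(k:ℝ)/2) := by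
            have := hAle k
            have hπ := Real.pi_pos
            nlinarith
    have hg0 : Summable (fun k => g k 0) := by
      have : (fun k => g k 0) = fun _ => (0:ℝ) := by
        funext k; simp [hg]
      rw [this]; exact summable_zero
    have hR : ∀ s : ℝ, HasDerivAt (fun z => ∑' k, g k z) (∑' k, g' k s) s :=
      fun s => hasDerivAt_tsum hsum_u hgd hgb hg0 s
    have hflow : ∀ σ : ℝ, HasDerivAt (fun s => (Φ s x).2 i) (∑' k, g' k σ) σ := by
      intro σ
      have h1 := hΦ.2.2 x σ i
      set θ := (Φ σ x).1 with hθ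
      set r := (Φ σ x).2 with hr
      have heq : (fun y : ℝ => H (Function.update θ i y, r))
          = fun y => (H (θ, r) + (∑' k, Real.exp (-Q k) * Real.cos (2 * π * (Q k * θ i - P k * θ 2))))
              - (∑' k, Real.exp (-Q k) * Real.cos (2 * π * (Q k * y - P k * θ 2))) := by
        funext y; rw [hHθ θ r y]; ring
      have hGd : ∀ p : ℝ, HasDerivAt
          (fun y => ∑' k, Real.exp (-Q k) * Real.cos (2 * π * (Q k * y - P k * θ 2)))
          (∑' k, -(2 * π * A k * Real.sin (2 * π * (Q k * p - P k * θ 2)))) p := by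
        intro p
        have hd1 : ∀ (k : ℕ) (y : ℝ),
            HasDerivAt (fun y : ℝ => Real.exp (-Q k) * Real.cos (2 * π * (Q k * y - P k * θ 2)))
              (-(2 * π * A k * Real.sin (2 * π * (Q k * y - P k * θ 2)))) y := by
          intro k y
          have h1 : HasDerivAt (fun y : ℝ => Q k * y - P k * θ 2) (Q k) y := by
            simpa using ((hasDerivAt_id y).const_mul (Q k)).sub_const (P k * θ 2)
          have h2 : HasDerivAt (fun y : ℝ => 2 * π * (Q k * y - P k * θ 2)) (2 * π * Q k) y :=
            h1.const_mul (2 * π)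
          have h3 : HasDerivAt (fun y : ℝ => Real.cos (2 * π * (Q k * y - P k * θ 2)))
              (-Real.sin (2 * π * (Q k * y - P k * θ 2)) * (2 * π * Q k)) y :=
            (Real.hasDerivAt_cos _).comp y h2
          have h4 := h3.const_mul (Real.exp (-Q k))
          refine h4.congr_deriv ?_
          simp only [hA]
          ring
        have hb1 : ∀ (k : ℕ) (y : ℝ),
            ‖-(2 * π * A k * Real.sin (2 * π * (Q k * y - P k * θ 2)))‖
              ≤ 2 * π * Real.exp (-(k:ℝ)/2) := by
          intro k y
          have h1 : |Real.sin (2 * π * (Q k * y - P k * θ 2))| ≤ 1 := Real.abs_sin_le_one _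
          calc ‖-(2 * π * A k * Real.sin (2 * π * (Q k * y - P k * θ 2)))‖
              = 2 * π * A k * |Real.sin (2 * π * (Q k * y - P k * θ 2))| := by
                rw [Real.norm_eq_abs, abs_neg, abs_mul]
                congr 1
                exact abs_of_nonneg (mul_pos (mul_pos two_pos Real.pi_pos) (hApos k)).le
            _ ≤ 2 * π * A k * 1 := mul_le_mul_of_nonneg_left h1
                (mul_pos (mul_pos two_pos Real.pi_pos) (hApos k)).le
            _ ≤ 2 * π * Real.exp (-(k:ℝ)/2) := by
                have := hAle k
                have hπ := Real.pi_pos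
                nlinarith
        have hs0 : Summable (fun k =>
            Real.exp (-Q k) * Real.cos (2 * π * (Q k * p - P k * θ 2))) := by
          apply Summable.of_norm_bounded summable_exp_half
          intro k
          have h1 : |Real.cos (2 * π * (Q k * p - P k * θ 2))| ≤ 1 := Real.abs_cos_le_one _
          have hAk := hAle k
          have hQ1k := hQ1 k
          have he := Real.exp_pos (-Q k)
          calc ‖Real.exp (-Q k) * Real.cos (2 * π * (Q k * p - P k * θ 2))‖
              = Real.exp (-Q k) * |Real.cos (2 * π * (Q k * p - P k * θ 2))| := by
                rw [Real.norm_eq_abs, abs_mul, abs_of_pos he]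
            _ ≤ Real.exp (-Q k) * 1 := mul_le_mul_of_nonneg_left h1 he.le
            _ ≤ A k := by simp only [hA]; nlinarith
            _ ≤ Real.exp (-(k:ℝ)/2) := hAk
        exact hasDerivAt_tsum hsum_u hd1 hb1 hs0 p
      have hder : deriv (fun y : ℝ => H (Function.update θ i y, r)) (θ i)
          = -(∑' k, -(2 * π * A k * Real.sin (2 * π * (Q k * θ i - P k * θ 2)))) := by
        rw [heq]
        exact (HasDerivAt.const_sub _ (hGd (θ i))).deriv
      rw [hder, neg_neg] at h1
      have hθival : θ i = x.1 i + a * σ := by rw [hθ, ha]; exact θflow x i σ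
      have hθ2val : θ 2 = x.1 2 + σ := by rw [hθ, θflow x 2 σ, hω2]; ring
      have hfun : (fun k => -(2 * π * A k * Real.sin (2 * π * (Q k * θ i - P k * θ 2))))
          = fun k => g' k σ := by
        funext k
        rw [hθival, hθ2val, hg']
        congr 3
        rw [hc, hδ]
        ring
      rwa [hfun] at h1
    have h0 : (Φ 0 x).2 i = x.2 i + ∑' k, g k 0 := by
      have hz : (fun k => g k 0) = fun _ => (0:ℝ) := by funext k; simp [hg]
      rw [hΦ.1 x, hz, tsum_zero, add_zero]
    exact eq_of_hasDerivAt_eq (d := fun s => ∑' k, g' k s) hflow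
      (fun s => (hR s).const_add (x.2 i)) h0 τ
  -- ## Independence clause
  have indep : ∀ x y : PS3, x.1 i = y.1 i → x.1 2 = y.1 2 → x.2 i = y.2 i →
      (Φ t x).2 i = (Φ t y).2 i := by
    intro x y h1 h2 h3
    rw [rflow x t, rflow y t, h1, h2, h3]
  refine ⟨?_, indep⟩
  intro s₀ hs₀ w hw
  set L := Q m₀ with hL
  have hLpos : 0 < L := hQpos m₀
  have hL1 : 1 ≤ L := hQ1 m₀
  set c : ℝ → ℕ → ℝ := fun s k => Q k * (s₀.1 i + s) - P k * s₀.1 2 with hcc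
  set T : ℝ → ℕ → ℝ := fun s k => (A k / δ k) *
      (Real.cos (2 * π * (c s k + δ k * t)) - Real.cos (2 * π * (c s k))) with hT
  set F : ℝ → ℝ := fun s => s₀.2 i + ∑' k, T s k with hF
  -- value of the flow along the curve
  have hFs : ∀ s : ℝ, (Φ t (Function.update s₀.1 i (s₀.1 i + s),
      Function.update s₀.2 2
        (s₀.2 2 + (H s₀ - H (Function.update s₀.1 i (s₀.1 i + s), s₀.2))))).2 i = F s := by
    intro s
    set X : PS3 := (Function.update s₀.1 i (s₀.1 i + s),
      Function.update s₀.2 2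
        (s₀.2 2 + (H s₀ - H (Function.update s₀.1 i (s₀.1 i + s), s₀.2)))) with hXdef
    have hX1i : X.1 i = s₀.1 i + s := Function.update_self _ _ _
    have hX12 : X.1 2 = s₀.1 2 := Function.update_of_ne (Ne.symm hi2) _ _
    have hX2i : X.2 i = s₀.2 i := Function.update_of_ne hi2 _ _
    rw [rflow X t, hX1i, hX12, hX2i]
  -- per-term bound
  have habsT : ∀ (s : ℝ) (k : ℕ), |T s k| = (A k / |δ k|) *
      |Real.cos (2 * π * (c s k + δ k * t)) - Real.cos (2 * π * (c s k))| := by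
    intro s k
    rw [hT]
    rw [abs_mul, abs_div, abs_of_pos (hApos k)]
  have hTle2 : ∀ (s : ℝ) (k : ℕ), |T s k| ≤ 2 * π * A k * t := by
    intro s k
    have hne := hδpos k
    have h1 : |Real.cos (2 * π * (c s k + δ k * t)) - Real.cos (2 * π * (c s k))|
        ≤ 2 * π * |δ k| * t := by
      have h2 := abs_cos_sub_cos_le (2 * π * (c s k + δ k * t)) (2 * π * (c s k))
      have harg : 2 * π * (c s k + δ k * t) - 2 * π * (c s k) = 2 * π * (δ k * t) := by ring
      rw [harg] at h2
      refine h2.trans (le_of_eq ?_)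
      rw [show (2*π*(δ k * t)) = (2*π*t)*(δ k) by ring, abs_mul,
        abs_of_nonneg (by positivity : (0:ℝ) ≤ 2*π*t)]
      ring
    rw [habsT]
    calc (A k / |δ k|) * |Real.cos (2 * π * (c s k + δ k * t)) - Real.cos (2 * π * (c s k))|
        ≤ (A k / |δ k|) * (2 * π * |δ k| * t) :=
          mul_le_mul_of_nonneg_left h1 (div_nonneg (hApos k).le (abs_nonneg _))
      _ = 2 * π * A k * t := by field_simp [hne.ne']
  have hTbound : ∀ (k : ℕ) (s : ℝ), ‖T s k‖ ≤ (2 * π * t) * Real.exp (-(k:ℝ)/2) := by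
    intro k s
    rw [Real.norm_eq_abs]
    refine (hTle2 s k).trans ?_
    have h := mul_le_mul_of_nonneg_left (hAle k) (by positivity : (0:ℝ) ≤ 2*π*t)
    calc 2 * π * A k * t = (2*π*t) * A k := by ring
      _ ≤ (2*π*t) * Real.exp (-(k:ℝ)/2) := h
  have hsum_bnd : Summable (fun k : ℕ => (2 * π * t) * Real.exp (-(k:ℝ)/2)) :=
    summable_exp_half.mul_left _
  have hTsummable : ∀ s : ℝ, Summable (fun k => T s k) := fun s =>
    Summable.of_norm_bounded hsum_bnd (fun k => hTbound k s)
  have hTcont : ∀ k : ℕ, Continuous (fun s => T s k) := by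
    intro k
    simp only [hT, hcc]
    fun_prop
  have hFcont : Continuous F := by
    apply Continuous.add continuous_const
    exact continuous_tsum hTcont hsum_bnd (fun k s => hTbound k s)
  -- main-mode analysis
  set dm := δ m₀ with hdm
  have hδm_ne : dm ≠ 0 := hδne m₀
  have hπ := Real.pi_pos
  have hδt : |dm| * t ≤ 1/4 := by
    have h1 : |dm| ≤ 1 / Q (m₀+1) := hδup m₀
    have h2 : 0 < Q (m₀+1) := hQpos (m₀+1)
    calc |dm| * t ≤ (1/Q (m₀+1)) * (Q (m₀+1)/4) :=
          mul_le_mul h1 ht2 htpos.le (by positivity)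
      _ = 1/4 := by field_simp
  have hβ : 2 * t ≤ Real.sin (π * dm * t) / dm := by
    rcases lt_or_gt_of_ne hδm_ne with hneg | hpos
    · have habs : |dm| = -dm := abs_of_neg hneg
      rw [habs] at hδt
      have h0 : π * dm * t ≤ 0 := by nlinarith [mul_pos hπ htpos]
      have h1 : -(π/2) ≤ π * dm * t := by
        nlinarith [mul_le_mul_of_nonneg_left hδt hπ.le]
      have hsin := Real.sin_le_mul h1 h0
      rw [le_div_iff_of_neg hneg]
      calc Real.sin (π * dm * t) ≤ 2/π * (π * dm * t) := hsin
        _ = 2 * t * dm := by field_simp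
    · have habs : |dm| = dm := abs_of_pos hpos
      rw [habs] at hδt
      have h0 : 0 ≤ π * dm * t := by positivity
      have h1 : π * dm * t ≤ π/2 := by
        nlinarith [mul_le_mul_of_nonneg_left hδt hπ.le]
      have hsin := Real.mul_le_sin h0 h1
      rw [le_div_iff₀ hpos]
      calc 2 * t * dm = 2/π * (π * dm * t) := by field_simp
        _ ≤ Real.sin (π * dm * t) := hsin
  have hAt : L ≤ A m₀ * t := by
    have he : A m₀ * Real.exp (Q m₀) = L := by
      simp only [hA]
      rw [mul_assoc, ← Real.exp_add]
      simp [hL]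
    calc L = A m₀ * Real.exp (Q m₀) := he.symm
      _ ≤ A m₀ * t := mul_le_mul_of_nonneg_left ht1 (hApos m₀).le
  have hmain : ∀ s : ℝ, T s m₀ = -(2 * A m₀) * Real.sin (2 * π * (c s m₀) + π * dm * t)
      * (Real.sin (π * dm * t) / dm) := by
    intro s
    simp only [hT, ← hdm]
    rw [Real.cos_sub_cos]
    have h1 : (2 * π * (c s m₀ + dm * t) + 2 * π * (c s m₀)) / 2
        = 2 * π * (c s m₀) + π * dm * t := by ring
    have h2 : (2 * π * (c s m₀ + dm * t) - 2 * π * (c s m₀)) / 2 = π * dm * t := by ring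
    rw [h1, h2]
    ring
  -- phase selection
  have hQm_ne : Q m₀ ≠ 0 := (hQpos m₀).ne'
  have hpick : ∀ v : ℝ, ∃ s ∈ Icc (0:ℝ) (1 / Q m₀),
      Real.sin (2 * π * (c s m₀) + π * dm * t) = Real.sin v := by
    intro v
    set ψ0 : ℝ := 2 * π * (c 0 m₀) + π * dm * t with hψ0
    set u : ℝ := (v - ψ0) / (2 * π) with hu
    refine ⟨Int.fract u / Q m₀, ⟨div_nonneg (Int.fract_nonneg u) (hQpos m₀).le, ?_⟩, ?_⟩
    · have h1 := (Int.fract_lt_one u).le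
      have hQp := hQpos m₀
      rw [div_le_div_iff₀ hQp hQp]
      nlinarith
    · have hmid : 2 * π * (c (Int.fract u / Q m₀) m₀) + π * dm * t
          = ψ0 + 2 * π * Q m₀ * (Int.fract u / Q m₀) := by
        rw [hψ0]
        simp only [hcc]
        ring
      rw [hmid]
      have h2 : 2 * π * Q m₀ * (Int.fract u / Q m₀) = 2 * π * Int.fract u := by
        field_simp
      rw [h2]
      have h3 : Int.fract u = u - ⌊u⌋ := (Int.self_sub_floor u).symm
      rw [h3, hu]
      have h4 : ψ0 + 2 * π * ((v - ψ0)/(2*π) - ⌊(v - ψ0)/(2*π)⌋)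
          = v + (-⌊(v - ψ0)/(2*π)⌋ : ℤ) * (2*π) := by
        push_cast
        field_simp
        ring
      rw [h4, Real.sin_add_int_mul_two_pi]
  obtain ⟨sp, hsp_mem, hsp_sin⟩ := hpick (-(π/2))
  obtain ⟨sm, hsm_mem, hsm_sin⟩ := hpick (π/2)
  rw [Real.sin_neg, Real.sin_pi_div_two] at hsp_sin
  rw [Real.sin_pi_div_two] at hsm_sin
  have hA0 := hApos m₀
  have hβA : 2 * (A m₀ * t) ≤ A m₀ * (Real.sin (π * dm * t) / dm) := by
    have h := mul_le_mul_of_nonneg_left hβ hA0.le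
    calc 2 * (A m₀ * t) = A m₀ * (2 * t) := by ring
      _ ≤ A m₀ * (Real.sin (π * dm * t) / dm) := h
  have hTp : 4 * L ≤ T sp m₀ := by
    rw [hmain sp, hsp_sin]
    have he : -(2 * A m₀) * (-1) * (Real.sin (π * dm * t) / dm)
        = 2 * (A m₀ * (Real.sin (π * dm * t) / dm)) := by ring
    rw [he]
    linarith [hβA, hAt]
  have hTm : T sm m₀ ≤ -(4 * L) := by
    rw [hmain sm, hsm_sin]
    have he : -(2 * A m₀) * 1 * (Real.sin (π * dm * t) / dm)
        = -(2 * (A m₀ * (Real.sin (π * dm * t) / dm))) := by ring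
    rw [he]
    linarith [hβA, hAt]
  -- error bound
  have hsplit : ∀ s : ℝ, ∑' k, T s k = T s m₀ + ∑' k, if k = m₀ then 0 else T s k :=
    fun s => (hTsummable s).tsum_eq_add_tsum_ite m₀
  set B : ℕ → ℝ := fun k => if k = m₀ then 0 else
      (if k = 0 then 4 * L * Real.exp (-1) else 4 * L * Real.exp (-((k:ℝ) + 100)/2)) with hB
  have hBnonneg : ∀ k, 0 ≤ B k := by
    intro k
    simp only [hB]
    split_ifs
    · exact le_rfl
    · positivity
    · positivity
  have hAexp : ∀ k : ℕ, 1 ≤ k → A k ≤ Real.exp (-((k:ℝ) + 100)/2) := by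
    intro k hk
    have hQk100 : (k:ℝ) + 100 ≤ Q k := hQk k hk
    have h8 : (8:ℝ) ≤ Q k := by linarith
    calc A k ≤ Real.exp (Q k / 2) * Real.exp (-Q k) :=
          mul_le_mul_of_nonneg_right (self_le_exp_half h8) (Real.exp_pos _).le
      _ = Real.exp (-(Q k)/2) := by rw [← Real.exp_add]; ring_nf
      _ ≤ Real.exp (-((k:ℝ) + 100)/2) := by
          apply Real.exp_le_exp.2; linarith
  have hTB : ∀ (s : ℝ) (k : ℕ), ‖if k = m₀ then 0 else T s k‖ ≤ B k := by
    intro s k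
    by_cases hk : k = m₀
    · simp [hB, hk]
    · rw [if_neg hk, Real.norm_eq_abs]
      simp only [hB]
      rw [if_neg hk]
      rcases lt_or_ge k m₀ with hlt | hge
      · -- low modes: use the lower bound on |δ k|
        have hinv : 1 / |δ k| ≤ 2 * Q (k+1) := by
          have hlow := hδlow k
          have hp := hδpos k
          have hq := hQpos (k+1)
          rw [div_le_iff₀ hp]
          rw [div_le_iff₀ (by positivity : (0:ℝ) < 2 * Q (k+1))] at hlow
          nlinarith
        have hQk1m : Q (k+1) ≤ L := by
          rw [hL]; exact hQmono (Nat.succ_le_of_lt hlt)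
        have hcos2 := abs_cos_sub_cos_le_two
          (2 * π * (c s k + δ k * t)) (2 * π * (c s k))
        have hTle : |T s k| ≤ 4 * L * A k := by
          rw [habsT]
          calc (A k / |δ k|) *
              |Real.cos (2 * π * (c s k + δ k * t)) - Real.cos (2 * π * (c s k))|
              ≤ (A k / |δ k|) * 2 :=
                mul_le_mul_of_nonneg_left hcos2 (div_nonneg (hApos k).le (abs_nonneg _))
            _ = 2 * A k * (1 / |δ k|) := by ring
            _ ≤ 2 * A k * (2 * Q (k+1)) :=
                mul_le_mul_of_nonneg_left hinv (mul_nonneg (by norm_num) (hApos k).le)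
            _ ≤ 4 * L * A k := by nlinarith [hApos k, hQpos (k+1)]
        by_cases hk0 : k = 0
        · subst hk0
          rw [if_pos rfl]
          have hA0e : A 0 ≤ Real.exp (-1) := mul_exp_neg_le (Q 0)
          calc |T s 0| ≤ 4 * L * A 0 := hTle
            _ ≤ 4 * L * Real.exp (-1) := mul_le_mul_of_nonneg_left hA0e (by positivity)
        · rw [if_neg hk0]
          have hk1 : 1 ≤ k := Nat.one_le_iff_ne_zero.2 hk0
          calc |T s k| ≤ 4 * L * A k := hTle
            _ ≤ 4 * L * Real.exp (-((k:ℝ) + 100)/2) :=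
                mul_le_mul_of_nonneg_left (hAexp k hk1) (by positivity)
      · -- high modes: use the time bound
        have hgt : m₀ < k := lt_of_le_of_ne hge (Ne.symm hk)
        have hk1 : 1 ≤ k := Nat.one_le_of_lt (Nat.lt_of_le_of_lt (Nat.zero_le m₀) hgt)
        have hk0 : k ≠ 0 := Nat.one_le_iff_ne_zero.1 hk1
        rw [if_neg hk0]
        have hQQ : Q (m₀+1) ≤ Q k := hQmono hgt
        have hQk100 : (k:ℝ) + 100 ≤ Q k := hQk k hk1
        have hsq : Q k ^ 2 ≤ Real.exp (Q k / 2) := sq_le_exp_half (by linarith)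
        have hAQ : A k * Q k ≤ Real.exp (-((k:ℝ) + 100)/2) := by
          have h1 : A k * Q k = Q k ^ 2 * Real.exp (-Q k) := by
            simp only [hA]; ring
          rw [h1]
          calc Q k ^ 2 * Real.exp (-Q k)
              ≤ Real.exp (Q k / 2) * Real.exp (-Q k) :=
                mul_le_mul_of_nonneg_right hsq (Real.exp_pos _).le
            _ = Real.exp (-(Q k)/2) := by rw [← Real.exp_add]; ring_nf
            _ ≤ Real.exp (-((k:ℝ) + 100)/2) := Real.exp_le_exp.2 (by linarith)
        have hπ4 : π ≤ 4 := by nlinarith [Real.pi_lt_d2]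
        calc |T s k| ≤ 2 * π * A k * t := hTle2 s k
          _ ≤ 2 * π * A k * (Q k / 4) := by
              apply mul_le_mul_of_nonneg_left _
                (mul_nonneg (mul_nonneg (by norm_num) Real.pi_pos.le) (hApos k).le)
              calc t ≤ Q (m₀+1)/4 := ht2
                _ ≤ Q k / 4 := by linarith
          _ = (π / 2) * (A k * Q k) := by ring
          _ ≤ 2 * (A k * Q k) := by
              apply mul_le_mul_of_nonneg_right _ (mul_nonneg (hApos k).le (hQpos k).le)
              linarith
          _ ≤ 2 * Real.exp (-((k:ℝ) + 100)/2) :=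
              mul_le_mul_of_nonneg_left hAQ (by norm_num)
          _ ≤ 4 * L * Real.exp (-((k:ℝ) + 100)/2) := by
              apply mul_le_mul_of_nonneg_right _ (Real.exp_pos _).le
              linarith
  have hBsummable : Summable B := by
    apply Summable.of_nonneg_of_le hBnonneg (g := B)
      (f := fun k : ℕ => (4 * L) * Real.exp (-(k:ℝ)/2))
    · intro k
      simp only [hB]
      split_ifs with h h0
      · positivity
      · subst h0
        have : Real.exp (-1:ℝ) ≤ Real.exp (-(0:ℕ)/2 : ℝ) := by
          apply Real.exp_le_exp.2; norm_num
        push_cast at this ⊢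
        nlinarith
      · have : Real.exp (-((k:ℝ) + 100)/2) ≤ Real.exp (-(k:ℝ)/2) := by
          apply Real.exp_le_exp.2; linarith
        nlinarith
    · exact summable_exp_half.mul_left _
  have hshift : Summable (fun k : ℕ => Real.exp (-((k:ℝ) + 101)/2)) := by
    apply Summable.of_nonneg_of_le (fun k => (Real.exp_pos _).le)
      (fun k => ?_) summable_exp_half
    apply Real.exp_le_exp.2
    have : (0:ℝ) ≤ (k:ℝ) := Nat.cast_nonneg k
    linarith
  have hEbound : ∀ s : ℝ, |∑' k, if k = m₀ then 0 else T s k| ≤ 2 * L := by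
    intro s
    have h1 : ‖∑' k, if k = m₀ then 0 else T s k‖ ≤ ∑' k, B k :=
      tsum_of_norm_bounded hBsummable.hasSum (hTB s)
    rw [Real.norm_eq_abs] at h1
    refine h1.trans ?_
    have h2 : ∑' k, B k = B 0 + ∑' k, B (k+1) := hBsummable.tsum_eq_zero_add
    have h3 : B 0 ≤ 4 * L * Real.exp (-1) := by
      simp only [hB]
      split_ifs
      · positivity
      · exact le_rfl
    have hsumB1 : Summable (fun k => B (k+1)) := (summable_nat_add_iff 1).2 hBsummable
    have h4 : ∑' k, B (k+1) ≤ ∑' k : ℕ, (4 * L) * Real.exp (-((k:ℝ) + 101)/2) := by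
      apply Summable.tsum_le_tsum _ hsumB1 (hshift.mul_left _)
      intro k
      have hne0 : (k+1 : ℕ) ≠ 0 := Nat.succ_ne_zero k
      by_cases hc : k + 1 = m₀
      · have hz : B (k+1) = 0 := by simp [hB, hc]
        rw [hz]
        have := Real.exp_pos (-((k:ℝ)+101)/2)
        nlinarith
      · have hz : B (k+1) = 4 * L * Real.exp (-(((k+1:ℕ):ℝ) + 100)/2) := by
          simp only [hB, if_neg hc, if_neg hne0]
        rw [hz]
        apply le_of_eq
        congr 1
        push_cast
        ring_nf
    have h5 : ∑' k : ℕ, (4 * L) * Real.exp (-((k:ℝ) + 101)/2)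
        = (4 * L) * ∑' k : ℕ, Real.exp (-((k:ℝ) + 101)/2) := tsum_mul_left
    have h6 := tsum_exp_half_le
    have hexp1 : Real.exp (-1 : ℝ) ≤ 37/100 := by
      rw [Real.exp_neg]
      have hgt := Real.exp_one_gt_d9
      calc (Real.exp 1)⁻¹ ≤ (2.7182818283 : ℝ)⁻¹ := by
            apply inv_anti₀ (by norm_num) hgt.le
        _ ≤ 37/100 := by norm_num
    have htail : ∑' k, B (k+1) ≤ (4 * L) * (1/100) := by
      rw [h5] at h4
      refine h4.trans ?_
      apply mul_le_mul_of_nonneg_left h6 (by positivity)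
    rw [h2]
    nlinarith
  -- conclusion via IVT
  have hr0 : |s₀.2 i| ≤ L / 10 := by
    have := norm_le_pi_norm s₀.2 i
    rw [Real.norm_eq_abs] at this
    exact this.trans hs₀
  have habr := abs_le.1 hr0
  have hFp : L ≤ F sp := by
    have hE := abs_le.1 (hEbound sp)
    have : F sp = s₀.2 i + (T sp m₀ + ∑' k, if k = m₀ then 0 else T sp k) := by
      rw [hF]
      simp only []
      rw [hsplit sp]
    rw [this]
    linarith [hTp]
  have hFm : F sm ≤ -L := by
    have hE := abs_le.1 (hEbound sm)
    have : F sm = s₀.2 i + (T sm m₀ + ∑' k, if k = m₀ then 0 else T sm k) := by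
      rw [hF]
      simp only []
      rw [hsplit sm]
    rw [this]
    linarith [hTm]
  have hmemw : w ∈ uIcc (F sm) (F sp) := by
    rw [Set.uIcc_of_le (by linarith : F sm ≤ F sp)]
    exact ⟨by linarith [hw.1], by linarith [hw.2]⟩
  obtain ⟨s, hsI, hFsw⟩ := intermediate_value_uIcc hFcont.continuousOn hmemw
  have hsmem : s ∈ Icc (0:ℝ) (1 / Q m₀) := Set.uIcc_subset_Icc hsm_mem hsp_mem hsI
  exact ⟨s, hsmem, (hFs s).trans hFsw⟩



end StretchAux

open StretchAux in
theorem stretching_Yoccoz (α α' : ℝ) (hY' : MemY α α')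
    (H : PS3 → ℝ)
    (hH : H = fun x : PS3 =>
      (∑ j, x.2 j * (![α, α', 1] : Fin 3 → ℝ) j) + hY α α' x.1)
    (Φ : ℝ → PS3 → PS3) (hΦ : IsHamFlow H Φ) :
    ∀ n : ℕ, 1 ≤ n →
      (∀ t ∈ Icc (Real.exp (cfq α n)) (cfq α (n + 1) / 4),
        Stretching1 H Φ t (1 / cfq α n) (cfq α n)) ∧
      (∀ t ∈ Icc (Real.exp (cfq α' n)) (cfq α' (n + 1) / 4),
        Stretching2 H Φ t (1 / cfq α' n) (cfq α' n)) := by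
  have hα : Irrational α := hY'.1
  have hα' : Irrational α' := hY'.2.1
  have hMY := hY'.2.2
  set ω : Fin 3 → ℝ := ![α, α', 1] with hω
  have hω0 : ω 0 = α := rfl
  have hω1 : ω 1 = α' := rfl
  have hω2 : ω 2 = 1 := rfl
  -- growth facts
  have hstep_a : ∀ m : ℕ, 1 ≤ m → cfq α m + 1 ≤ cfq α (m+1) := by
    intro m hm
    have h1 := (hMY m hm).1
    have h2 := (hMY m hm).2
    have e1 := Real.add_one_le_exp (cfq α m)
    have e2 := Real.add_one_le_exp (cfq α' m)
    have := den_pos hα m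
    linarith
  have hstep_b : ∀ m : ℕ, 1 ≤ m → cfq α' m + 1 ≤ cfq α' (m+1) := by
    intro m hm
    have h2 := (hMY m hm).2
    have h1 := (hMY (m+1) (by omega)).1
    have e1 := Real.add_one_le_exp (cfq α (m+1))
    have e2 := Real.add_one_le_exp (cfq α' m)
    have := den_pos hα' m
    linarith
  have hgrow_a : ∀ m : ℕ, 1 ≤ m → 2 * cfq α m ≤ cfq α (m+2) := by
    intro m hm
    have h1 := (hMY (m+1) (by omega)).1
    have h2 := (hMY (m+1) (by omega)).2
    have e1 := Real.add_one_le_exp (cfq α (m+1))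
    have e2 := Real.add_one_le_exp (cfq α' (m+1))
    have hm1 := den_mono hα (Nat.le_succ m)
    have := den_pos hα m
    linarith
  have hgrow_b : ∀ m : ℕ, 1 ≤ m → 2 * cfq α' m ≤ cfq α' (m+2) := by
    intro m hm
    have h1 := (hMY (m+2) (by omega)).1
    have h2 := (hMY (m+1) (by omega)).2
    have e1 := Real.add_one_le_exp (cfq α (m+2))
    have e2 := Real.add_one_le_exp (cfq α' (m+1))
    have hm1 := den_mono hα' (Nat.le_succ m)
    have := den_pos hα' m
    linarith
  have he2 : (2:ℝ) ≤ Real.exp 1 := by nlinarith [Real.add_one_le_exp (1:ℝ)]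
  have hbase_a : (101:ℝ) ≤ cfq α 2 := by
    have h1 := (hMY 1 le_rfl).1
    have h2 := (hMY 1 le_rfl).2
    have hq1 : (1:ℝ) ≤ cfq α 1 := one_le_den hα 1
    have he1 : Real.exp 1 ≤ Real.exp (cfq α 1) := Real.exp_le_exp.2 hq1
    have hq'1 : (8:ℝ) ≤ cfq α' 1 := by linarith
    have h81 : (81:ℝ) ≤ Real.exp 8 := by
      have h3 : (3:ℝ) ≤ Real.exp 2 := by nlinarith [Real.add_one_le_exp (2:ℝ)]
      calc (81:ℝ) = 3^(4:ℕ) := by norm_num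
        _ ≤ Real.exp 2 ^ (4:ℕ) := pow_le_pow_left₀ (by norm_num) h3 4
        _ = Real.exp 8 := by rw [← Real.exp_nat_mul]; congr 1; norm_num
    have he8 : Real.exp 8 ≤ Real.exp (cfq α' 1) := Real.exp_le_exp.2 hq'1
    linarith
  have hbase_b : (101:ℝ) ≤ cfq α' 2 := by
    have h1 := (hMY 2 (by omega)).1
    have e1 := Real.add_one_le_exp (cfq α 2)
    linarith
  have hQa_ge : ∀ k : ℕ, 1 ≤ k → (k:ℝ) + 100 ≤ cfq α (k+1) := by
    intro k hk
    induction k with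
    | zero => exact absurd hk (by norm_num)
    | succ k ih =>
      cases Nat.eq_zero_or_pos k with
      | inl h0 => subst h0; push_cast; linarith [hbase_a]
      | inr hpos =>
        have hih := ih hpos
        have hs := hstep_a (k+1) (by omega)
        push_cast at hih ⊢
        linarith
  have hQb_ge : ∀ k : ℕ, 1 ≤ k → (k:ℝ) + 100 ≤ cfq α' (k+1) := by
    intro k hk
    induction k with
    | zero => exact absurd hk (by norm_num)
    | succ k ih =>
      cases Nat.eq_zero_or_pos k with
      | inl h0 => subst h0; push_cast; linarith [hbase_b]
      | inr hpos =>
        have hih := ih hpos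
        have hs := hstep_b (k+1) (by omega)
        push_cast at hih ⊢
        linarith
  have hQa0 : (1:ℝ) ≤ cfq α 1 := one_le_den hα 1
  have hQb0 : (1:ℝ) ≤ cfq α' 1 := one_le_den hα' 1
  have hmono_a : ∀ k : ℕ, cfq α (k+1) + 1 ≤ cfq α (k+2) := fun k => hstep_a (k+1) (by omega)
  have hmono_b : ∀ k : ℕ, cfq α' (k+1) + 1 ≤ cfq α' (k+2) := fun k => hstep_b (k+1) (by omega)
  have hδup_a : ∀ k : ℕ, |cfq α (k+1) * α - cfp α (k+1)| ≤ 1 / cfq α (k+2) :=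
    fun k => den_mul_sub_num_le hα (k+1)
  have hδlow_a : ∀ k : ℕ, 1 / (2 * cfq α (k+2)) ≤ |cfq α (k+1) * α - cfp α (k+1)| :=
    fun k => den_mul_sub_num_lower hα (k+1) (hgrow_a (k+1) (by omega))
  have hδup_b : ∀ k : ℕ, |cfq α' (k+1) * α' - cfp α' (k+1)| ≤ 1 / cfq α' (k+2) :=
    fun k => den_mul_sub_num_le hα' (k+1)
  have hδlow_b : ∀ k : ℕ, 1 / (2 * cfq α' (k+2)) ≤ |cfq α' (k+1) * α' - cfp α' (k+1)| :=
    fun k => den_mul_sub_num_lower hα' (k+1) (hgrow_b (k+1) (by omega))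
  -- Hamiltonian structure facts
  have hHr : ∀ (θ r : Fin 3 → ℝ) (j : Fin 3) (y : ℝ),
      H (θ, Function.update r j y) = H (θ, r) + (y - r j) * ω j := by
    intro θ r j y
    rw [hH]
    simp only [Fin.sum_univ_three]
    fin_cases j <;>
      simp [hω, Function.update_self, Function.update_of_ne, Fin.isValue] <;> ring
  have hHθ0 : ∀ (θ r : Fin 3 → ℝ) (y : ℝ),
      H (Function.update θ 0 y, r) = H (θ, r)
        - (∑' k : ℕ, Real.exp (-cfq α (k+1)) *
            Real.cos (2 * π * (cfq α (k+1) * y - cfp α (k+1) * θ 2)))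
        + (∑' k : ℕ, Real.exp (-cfq α (k+1)) *
            Real.cos (2 * π * (cfq α (k+1) * θ 0 - cfp α (k+1) * θ 2))) := by
    intro θ r y
    rw [hH]
    simp only [hY]
    have h0 : Function.update θ 0 y 0 = y := Function.update_self _ _ _
    have h1 : Function.update θ 0 y 1 = θ 1 := Function.update_of_ne (by decide) _ _
    have h2 : Function.update θ 0 y 2 = θ 2 := Function.update_of_ne (by decide) _ _
    simp only [h0, h1, h2]
    ring
  have hHθ1 : ∀ (θ r : Fin 3 → ℝ) (y : ℝ),
      H (Function.update θ 1 y, r) = H (θ, r)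
        - (∑' k : ℕ, Real.exp (-cfq α' (k+1)) *
            Real.cos (2 * π * (cfq α' (k+1) * y - cfp α' (k+1) * θ 2)))
        + (∑' k : ℕ, Real.exp (-cfq α' (k+1)) *
            Real.cos (2 * π * (cfq α' (k+1) * θ 1 - cfp α' (k+1) * θ 2))) := by
    intro θ r y
    rw [hH]
    simp only [hY]
    have h0 : Function.update θ 1 y 0 = θ 0 := Function.update_of_ne (by decide) _ _
    have h1 : Function.update θ 1 y 1 = y := Function.update_self _ _ _
    have h2 : Function.update θ 1 y 2 = θ 2 := Function.update_of_ne (by decide) _ _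
    simp only [h0, h1, h2]
    ring
  -- main conclusion
  intro n hn
  obtain ⟨m, rfl⟩ : ∃ m, n = m + 1 := ⟨n - 1, by omega⟩
  constructor
  · -- part (a)
    intro t ht
    have hcore := core H Φ hΦ ω hω2 0 (by decide)
      (fun k => cfq α (k+1)) (fun k => cfp α (k+1))
      hQa0 hQa_ge hmono_a hδup_a hδlow_a hHθ0 hHr m t ht.1 ht.2
    constructor
    · intro s₀ hs₀ w hw
      obtain ⟨s, hsmem, hws⟩ := hcore.1 s₀ hs₀ w hw
      refine ⟨(Function.update s₀.1 0 (s₀.1 0 + s),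
        Function.update s₀.2 2
          (s₀.2 2 + (H s₀ - H (Function.update s₀.1 0 (s₀.1 0 + s), s₀.2)))),
        ?_, hws⟩
      simp only [J1, Set.mem_setOf_eq]
      refine ⟨⟨s, hsmem, Function.update_self _ _ _⟩,
        Function.update_of_ne (by decide) _ _,
        Function.update_of_ne (by decide) _ _,
        Function.update_of_ne (by decide) _ _,
        Function.update_of_ne (by decide) _ _, ?_⟩
      rw [hHr (Function.update s₀.1 0 (s₀.1 0 + s)) s₀.2 2
        (s₀.2 2 + (H s₀ - H (Function.update s₀.1 0 (s₀.1 0 + s), s₀.2))), hω2]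
      ring
    · intro x y h1 h2 h3
      exact hcore.2 x y h1 h2 (congrFun h3 0)
  · -- part (b)
    intro t ht
    have hcore := core H Φ hΦ ω hω2 1 (by decide)
      (fun k => cfq α' (k+1)) (fun k => cfp α' (k+1))
      hQb0 hQb_ge hmono_b hδup_b hδlow_b hHθ1 hHr m t ht.1 ht.2
    constructor
    · intro s₀ hs₀ w hw
      obtain ⟨s, hsmem, hws⟩ := hcore.1 s₀ hs₀ w hw
      refine ⟨(Function.update s₀.1 1 (s₀.1 1 + s),
        Function.update s₀.2 2
          (s₀.2 2 + (H s₀ - H (Function.update s₀.1 1 (s₀.1 1 + s), s₀.2)))),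
        ?_, hws⟩
      simp only [J2, Set.mem_setOf_eq]
      refine ⟨Function.update_of_ne (by decide) _ _,
        ⟨s, hsmem, Function.update_self _ _ _⟩,
        Function.update_of_ne (by decide) _ _,
        Function.update_of_ne (by decide) _ _,
        Function.update_of_ne (by decide) _ _, ?_⟩
      rw [hHr (Function.update s₀.1 1 (s₀.1 1 + s)) s₀.2 2
        (s₀.2 2 + (H s₀ - H (Function.update s₀.1 1 (s₀.1 1 + s), s₀.2))), hω2]
      ring
    · intro x y h1 h2 h3
      exact hcore.2 x y h1 h2 (congrFun h3 1)
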